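/- Let G = ⟨N, T, P, S⟩ be an ε-free context-free grammar in Greibach form whose terminals are indexed as T = {t₁, …, t_k}, and let G′ be the grammar over terminal alphabet {0,1} with non-terminals N ∪ {B} ∪ {T₁, …, T_k} and productions B → 0, B → 1, T_j → B^{j−1} 1 B^{k−j} for each j, and A → T_j α for each production A → t_j α of G. Let σ be the substitution that maps each terminal t_j of G to the set {b ∈ {0,1}^k : the j-th letter of b is 1}. Then L(G′) = σ(L(G)), i.e. L(G′) is exactly the set of concatenations b₁b₂⋯b_m such that some string t_{j₁}t_{j₂}⋯t_{j_m} ∈ L(G) satisfies bᵢ ∈ σ(t_{jᵢ}) for all i. -/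

import Mathlib

instance {T N : Type} [DecidableEq T] [DecidableEq N] :
    DecidableEq (ContextFreeRule T N) := fun r₁ r₂ =>
  decidable_of_iff (r₁.input = r₂.input ∧ r₁.output = r₂.output)
    (by cases r₁; cases r₂; simp)

/-- An ε-free context-free grammar in Greibach form over the indexed terminal alphabet
`T = {t₁, …, t_k}` (modelled as `Fin k`), with nonterminals `N`, start symbol `S`, and
production set `P`, where `(A, j, α) ∈ P` represents the production `A → t_j α`
(a terminal followed by a list of nonterminals). -/
def greibachGrammarFin {N : Type} [DecidableEq N] (k : ℕ) (S : N)
    (P : Finset (N × Fin k × List N)) : ContextFreeGrammar (Fin k) :=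
  ⟨N, S, P.image fun x =>
    ⟨x.1, Symbol.terminal x.2.1 :: x.2.2.map Symbol.nonterminal⟩⟩

/-- The bitmap grammar `G′` over the terminal alphabet `{0,1}` (modelled as `Bool`):
its nonterminals are `N ∪ {B} ∪ {T₁, …, T_k}` (with `B = Sum.inr none` and
`T_j = Sum.inr (some j)`, all fresh), and its productions are `B → 0`, `B → 1`,
`T_j → B^{j−1} 1 B^{k−j}` for each `j`, and `A → T_j α` for each production `A → t_j α`. -/
def bitmapGrammar {N : Type} [DecidableEq N] (k : ℕ) (S : N)
    (P : Finset (N × Fin k × List N)) : ContextFreeGrammar Bool :=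
  ⟨N ⊕ Option (Fin k), Sum.inl S,
    {⟨Sum.inr none, [Symbol.terminal false]⟩, ⟨Sum.inr none, [Symbol.terminal true]⟩}
    ∪ (Finset.univ.image fun j : Fin k =>
        ⟨Sum.inr (some j),
          List.replicate j.val (Symbol.nonterminal (Sum.inr none)) ++
            Symbol.terminal true ::
              List.replicate (k - 1 - j.val) (Symbol.nonterminal (Sum.inr none))⟩)
    ∪ (P.image fun x =>
        ⟨Sum.inl x.1,
          Symbol.nonterminal (Sum.inr (some x.2.1)) ::
            x.2.2.map (fun B => Symbol.nonterminal (Sum.inl B))⟩)⟩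

open ContextFreeGrammar
section
section Helpers
variable {T : Type} {g : ContextFreeGrammar T}

lemma derives_terminal_eq {w : List T} {s : List (Symbol T g.NT)}
    (h : g.Derives (w.map Symbol.terminal) s) : s = w.map Symbol.terminal := by
  cases h.eq_or_head with
  | inl h => exact h.symm
  | inr h =>
    obtain ⟨v, ⟨r, _, hr⟩, _⟩ := h
    obtain ⟨p, q, hpq, -⟩ := hr.exists_parts
    exfalso
    have : Symbol.nonterminal r.input ∈ w.map Symbol.terminal := by
      rw [hpq]; simp
    simp at this

lemma derives_append_split {u : List (Symbol T g.NT)} {w : List T}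
    (h : g.Derives u (w.map Symbol.terminal)) :
    ∀ x y : List (Symbol T g.NT), u = x ++ y →
      ∃ w₁ w₂ : List T, w = w₁ ++ w₂ ∧ g.Derives x (w₁.map Symbol.terminal) ∧
        g.Derives y (w₂.map Symbol.terminal) := by
  induction h using Relation.ReflTransGen.head_induction_on with
  | refl =>
    intro x y hxy
    refine ⟨w.take x.length, w.drop x.length, (w.take_append_drop _).symm, ?_, ?_⟩
    · have hx : x = (w.take x.length).map Symbol.terminal := by
        rw [List.map_take, hxy, List.take_left]
      rw [← hx]
    · have hy : y = (w.drop x.length).map Symbol.terminal := by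
        rw [List.map_drop, hxy, List.drop_left]
      rw [← hy]
  | head hp hd ih =>
    intro x y hxy
    obtain ⟨r, hrmem, hr⟩ := hp
    obtain ⟨p, q, hu, hv⟩ := hr.exists_parts
    subst hxy hv
    rw [List.append_assoc] at hu
    rcases List.append_eq_append_iff.mp hu with ⟨a, hp', hy⟩ | ⟨c, hx, hq⟩
    · obtain ⟨w₁, w₂, hw, h1, h2⟩ := ih x (a ++ r.output ++ q) (by rw [hp']; simp)
      refine ⟨w₁, w₂, hw, h1, ?_⟩
      refine Produces.trans_derives ⟨r, hrmem, ?_⟩ h2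
      rw [hy, ← List.append_assoc]
      exact r.rewrites_of_exists_parts a q
    · cases c with
      | nil =>
        simp at hx hq
        obtain ⟨w₁, w₂, hw, h1, h2⟩ := ih x (r.output ++ q) (by rw [hx]; simp)
        exact ⟨w₁, w₂, hw, h1, Produces.trans_derives
          ⟨r, hrmem, hq ▸ ContextFreeRule.Rewrites.head q⟩ h2⟩
      | cons s c' =>
        simp only [List.cons_append, List.cons.injEq, List.nil_append] at hq
        obtain ⟨hs, hq⟩ := hq
        obtain ⟨w₁, w₂, hw, h1, h2⟩ := ih (p ++ r.output ++ c') y (by rw [hq]; simp)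
        refine ⟨w₁, w₂, hw, Produces.trans_derives ⟨r, hrmem, ?_⟩ h1, h2⟩
        rw [hx, ← hs]
        simpa using r.rewrites_of_exists_parts p c'

lemma derives_nt_elim {Z : g.NT} {w : List T}
    (h : g.Derives [Symbol.nonterminal Z] (w.map Symbol.terminal)) :
    ∃ r ∈ g.rules, r.input = Z ∧ g.Derives r.output (w.map Symbol.terminal) := by
  cases h.eq_or_head with
  | inl h =>
    exfalso
    have : Symbol.nonterminal Z ∈ w.map Symbol.terminal := by rw [← h]; simp
    simp at this
  | inr h =>
    obtain ⟨v, ⟨r, hrmem, hr⟩, hd⟩ := h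
    obtain ⟨p, q, hu, hv⟩ := hr.exists_parts
    have hp : p = [] := by cases p <;> simp_all
    have hq : q = [] := by subst hp; cases q <;> simp_all
    subst hp hq
    simp at hu hv
    exact ⟨r, hrmem, hu.symm, hv ▸ hd⟩

end Helpers


end

section Bitmap
variable {N : Type} [DecidableEq N] {k : ℕ} {S : N} {P : Finset (N × Fin k × List N)}

lemma mem_bitmap_rules {r : ContextFreeRule Bool (N ⊕ Option (Fin k))} :
    r ∈ (bitmapGrammar k S P).rules ↔
      r = ⟨Sum.inr none, [Symbol.terminal false]⟩ ∨
      r = ⟨Sum.inr none, [Symbol.terminal true]⟩ ∨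
      (∃ j : Fin k, r = ⟨Sum.inr (some j),
          List.replicate j.val (Symbol.nonterminal (Sum.inr none)) ++
            Symbol.terminal true ::
              List.replicate (k - 1 - j.val) (Symbol.nonterminal (Sum.inr none))⟩) ∨
      (∃ x ∈ P, r = ⟨Sum.inl x.1,
          Symbol.nonterminal (Sum.inr (some x.2.1)) ::
            x.2.2.map (fun B => Symbol.nonterminal (Sum.inl B))⟩) := by
  unfold bitmapGrammar
  dsimp only
  simp only [bitmapGrammar, Finset.mem_union, Finset.mem_insert, Finset.mem_singleton,
    Finset.mem_image, Finset.mem_univ, true_and, eq_comm (b := r)]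
  tauto

end Bitmap

lemma map_terminal_inj {T : Type} {NN : Type} :
    Function.Injective (List.map (@Symbol.terminal T NN)) :=
  List.map_injective_iff.mpr fun a b h => by cases h; rfl

section Bitmap
variable {N : Type} [DecidableEq N] {k : ℕ} {S : N} {P : Finset (N × Fin k × List N)}

lemma derives_B {b : List Bool}
    (h : (bitmapGrammar k S P).Derives [Symbol.nonterminal (Sum.inr none)]
      (b.map Symbol.terminal)) : b.length = 1 := by
  obtain ⟨r, hrmem, hinput, hder⟩ := derives_nt_elim h
  rcases mem_bitmap_rules.mp hrmem with rfl | rfl | ⟨j, rfl⟩ | ⟨x, hx, rfl⟩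
  · have := map_terminal_inj (derives_terminal_eq (w := [false]) hder)
    simp [this]
  · have := map_terminal_inj (derives_terminal_eq (w := [true]) hder)
    simp [this]
  · exact absurd (Sum.inr.inj hinput) (by simp)
  · simp at hinput

lemma derives_replicate_B {m : ℕ} {c : List Bool}
    (h : (bitmapGrammar k S P).Derives
      (List.replicate m (Symbol.nonterminal (Sum.inr none))) (c.map Symbol.terminal)) :
    c.length = m := by
  induction m generalizing c with
  | zero =>
    have := derives_terminal_eq (w := ([] : List Bool)) h
    simpa using congrArg List.length this
  | succ m ih =>
    obtain ⟨c₁, c₂, rfl, h1, h2⟩ := derives_append_split h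
      [Symbol.nonterminal (Sum.inr none)]
      (List.replicate m (Symbol.nonterminal (Sum.inr none)))
      (by rw [List.replicate_succ]; rfl)
    simp only [List.length_append, derives_B h1, ih h2]
    omega

lemma derives_T {j : Fin k} {b : List Bool}
    (h : (bitmapGrammar k S P).Derives [Symbol.nonterminal (Sum.inr (some j))]
      (b.map Symbol.terminal)) : b.length = k ∧ b[(j:ℕ)]? = some true := by
  obtain ⟨r, hrmem, hinput, hder⟩ := derives_nt_elim h
  rcases mem_bitmap_rules.mp hrmem with rfl | rfl | ⟨j', rfl⟩ | ⟨x, hx, rfl⟩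
  · exact absurd (Sum.inr.inj hinput).symm (by simp)
  · exact absurd (Sum.inr.inj hinput).symm (by simp)
  · have hj : j = j' := Option.some.inj (Sum.inr.inj hinput).symm
    subst hj
    obtain ⟨b₁, b₂, rfl, h1, h2⟩ := derives_append_split hder
      (List.replicate j.val (Symbol.nonterminal (Sum.inr none)))
      (Symbol.terminal true ::
        List.replicate (k - 1 - j.val) (Symbol.nonterminal (Sum.inr none))) rfl
    obtain ⟨b₃, b₄, rfl, h3, h4⟩ := derives_append_split h2
      [Symbol.terminal true]
      (List.replicate (k - 1 - j.val) (Symbol.nonterminal (Sum.inr none))) rfl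
    have hb1 : b₁.length = j.val := derives_replicate_B h1
    have hb4 : b₄.length = k - 1 - j.val := derives_replicate_B h4
    have hb3 : b₃ = [true] := map_terminal_inj (derives_terminal_eq (w := [true]) h3)
    subst hb3
    have hjk := j.isLt
    constructor
    · simp only [List.length_append, List.length_cons, List.length_nil, hb1, hb4]
      omega
    · rw [List.getElem?_append_right (by omega), hb1]
      simp
  · simp at hinput

lemma replicate_derives (c : List Bool) :
    (bitmapGrammar k S P).Derives
      (List.replicate c.length (Symbol.nonterminal (Sum.inr none)))
      (c.map Symbol.terminal) := by
  induction c with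
  | nil => exact Derives.refl _
  | cons c₀ c' ih =>
    rw [List.length_cons, List.replicate_succ]
    have h1 : (bitmapGrammar k S P).Produces
        [Symbol.nonterminal (Sum.inr none)] [Symbol.terminal c₀] :=
      ⟨⟨Sum.inr none, [Symbol.terminal c₀]⟩,
        mem_bitmap_rules.mpr (by cases c₀ <;> [exact Or.inl rfl; exact Or.inr (Or.inl rfl)]),
        ContextFreeRule.Rewrites.input_output⟩
    exact (h1.single.append_right
        (List.replicate c'.length (Symbol.nonterminal (Sum.inr none)))).trans
      (ih.append_left [Symbol.terminal c₀])

lemma derives_T' {j : Fin k} {b : List Bool} (hlen : b.length = k)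
    (hj : b[(j:ℕ)]? = some true) :
    (bitmapGrammar k S P).Derives [Symbol.nonterminal (Sum.inr (some j))]
      (b.map Symbol.terminal) := by
  have hjk : (j:ℕ) < b.length := hlen ▸ j.isLt
  have hbj : b[(j:ℕ)] = true := by
    rw [List.getElem?_eq_getElem hjk] at hj; exact Option.some.inj hj
  have hb : b = b.take j ++ true :: b.drop (j+1) := by
    conv_lhs => rw [← List.take_append_drop (j:ℕ) b, ← List.getElem_cons_drop hjk]
    rw [hbj]
  have h0 : (bitmapGrammar k S P).Produces
      [Symbol.nonterminal (Sum.inr (some j))]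
      (List.replicate j.val (Symbol.nonterminal (Sum.inr none)) ++
        Symbol.terminal true ::
          List.replicate (k - 1 - j.val) (Symbol.nonterminal (Sum.inr none))) :=
    ⟨_, mem_bitmap_rules.mpr (Or.inr (Or.inr (Or.inl ⟨j, rfl⟩))),
      ContextFreeRule.Rewrites.input_output⟩
  have htake : (b.take (j:ℕ)).length = j.val := by
    rw [List.length_take]; omega
  have hdrop : (b.drop ((j:ℕ)+1)).length = k - 1 - j.val := by
    rw [List.length_drop]; omega
  have h1 : (bitmapGrammar k S P).Derives
      (List.replicate j.val (Symbol.nonterminal (Sum.inr none)))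
      ((b.take (j:ℕ)).map Symbol.terminal) := by
    have h1 := replicate_derives (S := S) (P := P) (b.take (j:ℕ))
    rw [htake] at h1; exact h1
  have h2 : (bitmapGrammar k S P).Derives
      (List.replicate (k - 1 - j.val) (Symbol.nonterminal (Sum.inr none)))
      ((b.drop ((j:ℕ)+1)).map Symbol.terminal) := by
    have h2 := replicate_derives (S := S) (P := P) (b.drop ((j:ℕ)+1))
    rw [hdrop] at h2; exact h2
  refine h0.trans_derives ?_
  conv_rhs => rw [hb]
  rw [List.map_append, List.map_cons]
  refine (h1.append_right _).trans ?_
  have h3 := (h2.append_left (((b.take (j:ℕ)).map Symbol.terminal) ++ [Symbol.terminal true]))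
  rw [List.append_assoc] at h3
  simp at h3 ⊢; exact h3
end Bitmap

section Main
variable {N : Type} [DecidableEq N] {k : ℕ} {S : N} {P : Finset (N × Fin k × List N)}

/-- map Greibach symbols into bitmap symbols -/
def bitmapPhi {N : Type} (k : ℕ) : Symbol (Fin k) N → Symbol Bool (N ⊕ Option (Fin k))
  | .terminal j => .nonterminal (.inr (some j))
  | .nonterminal A => .nonterminal (.inl A)

lemma produces_phi {u v : List (Symbol (Fin k) N)}
    (h : (greibachGrammarFin k S P).Produces u v) :
    (bitmapGrammar k S P).Produces (u.map (bitmapPhi k)) (v.map (bitmapPhi k)) := by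
  obtain ⟨r, hrmem, hr⟩ := h
  unfold greibachGrammarFin at hrmem
  dsimp only at hrmem
  replace hrmem := Finset.mem_image.mp hrmem
  obtain ⟨x, hx, rfl⟩ := hrmem
  replace hr : @ContextFreeRule.Rewrites (Fin k) N _ u v := hr
  obtain ⟨p, q, rfl, rfl⟩ := hr.exists_parts
  refine ⟨⟨Sum.inl x.1, Symbol.nonterminal (Sum.inr (some x.2.1)) ::
      x.2.2.map (fun B => Symbol.nonterminal (Sum.inl B))⟩,
    mem_bitmap_rules.mpr (Or.inr (Or.inr (Or.inr ⟨x, hx, rfl⟩))), ?_⟩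
  have h2 := ContextFreeRule.rewrites_of_exists_parts
    (⟨Sum.inl x.1, Symbol.nonterminal (Sum.inr (some x.2.1)) ::
      x.2.2.map (fun B => Symbol.nonterminal (Sum.inl B))⟩ :
        ContextFreeRule Bool (N ⊕ Option (Fin k)))
    (p.map (bitmapPhi k)) (q.map (bitmapPhi k))
  have h3 : ContextFreeRule.Rewrites
      (⟨Sum.inl x.1, Symbol.nonterminal (Sum.inr (some x.2.1)) ::
        x.2.2.map (fun B => Symbol.nonterminal (Sum.inl B))⟩ :
          ContextFreeRule Bool (N ⊕ Option (Fin k)))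
      (List.map (bitmapPhi k) (p ++ [Symbol.nonterminal x.1] ++ q))
      (List.map (bitmapPhi k) (p ++ (Symbol.terminal x.2.1 :: x.2.2.map Symbol.nonterminal) ++ q)) := by
    simpa [bitmapPhi, List.map_map, Function.comp_def] using h2
  exact h3

lemma derives_phi {u v : List (Symbol (Fin k) N)}
    (h : (greibachGrammarFin k S P).Derives u v) :
    (bitmapGrammar k S P).Derives (u.map (bitmapPhi k)) (v.map (bitmapPhi k)) :=
  Relation.ReflTransGen.lift _ (fun _ _ hp => produces_phi hp) _ _ h

lemma expand_T {u : List (Fin k)} {bs : List (List Bool)}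
    (hf : List.Forall₂ (fun (j : Fin k) (b : List Bool) =>
      b.length = k ∧ b[(j : ℕ)]? = some true) u bs) :
    (bitmapGrammar k S P).Derives
      (u.map fun j => Symbol.nonterminal (Sum.inr (some j)))
      ((bs.flatten).map Symbol.terminal) := by
  induction hf with
  | nil => exact Derives.refl _
  | cons hab h ih =>
    rw [List.map_cons, List.flatten_cons, List.map_append]
    exact ((derives_T' hab.1 hab.2).append_right _).trans (ih.append_left _)

lemma bitmap_to_greibach : ∀ (n : ℕ) (w : List Bool), w.length < n → ∀ A : N,
    (bitmapGrammar k S P).Derives [Symbol.nonterminal (Sum.inl A)] (w.map Symbol.terminal) →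
    ∃ (u : List (Fin k)) (bs : List (List Bool)),
      (greibachGrammarFin k S P).Derives [Symbol.nonterminal A] (u.map Symbol.terminal) ∧
      List.Forall₂ (fun (j : Fin k) (b : List Bool) =>
        b.length = k ∧ b[(j : ℕ)]? = some true) u bs ∧
      w = bs.flatten := by
  intro n
  induction n with
  | zero => intro w hw; omega
  | succ n ih =>
    intro w hw A h
    obtain ⟨r, hrmem, hinput, hder⟩ := derives_nt_elim h
    rcases mem_bitmap_rules.mp hrmem with rfl | rfl | ⟨j, rfl⟩ | ⟨x, hx, rfl⟩
    · simp at hinput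
    · simp at hinput
    · simp at hinput
    · have hA : x.1 = A := Sum.inl.inj hinput
      subst hA
      obtain ⟨w₀, w', rfl, h0, h1⟩ := derives_append_split hder
        [Symbol.nonterminal (Sum.inr (some x.2.1))]
        (x.2.2.map fun B => Symbol.nonterminal (Sum.inl B)) rfl
      obtain ⟨hw0len, hw0j⟩ := derives_T h0
      have hk : 0 < k := x.2.1.pos
      have hlen : w'.length < n := by
        rw [List.length_append, hw0len] at hw; omega
      have sub : ∀ (α : List N) (v : List Bool), v.length < n →
          (bitmapGrammar k S P).Derives (α.map fun B => Symbol.nonterminal (Sum.inl B))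
            (v.map Symbol.terminal) →
          ∃ (u : List (Fin k)) (bs : List (List Bool)),
            (greibachGrammarFin k S P).Derives (α.map Symbol.nonterminal)
              (u.map Symbol.terminal) ∧
            List.Forall₂ (fun (j : Fin k) (b : List Bool) =>
              b.length = k ∧ b[(j : ℕ)]? = some true) u bs ∧
            v = bs.flatten := by
        intro α
        induction α with
        | nil =>
          intro v hv hd
          have hv0 : v = [] := by
            have := derives_terminal_eq (w := ([] : List Bool)) hd
            simpa using map_terminal_inj this
          exact ⟨[], [], Derives.refl _, List.Forall₂.nil, by simp [hv0]⟩
        | cons B α' ihα =>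
          intro v hv hd
          obtain ⟨v₁, v₂, rfl, hB, hrest⟩ := derives_append_split hd
            [Symbol.nonterminal (Sum.inl B)]
            (α'.map fun B => Symbol.nonterminal (Sum.inl B)) rfl
          rw [List.length_append] at hv
          obtain ⟨u₁, bs₁, g1, f1, rfl⟩ := ih v₁ (by omega) B hB
          obtain ⟨u₂, bs₂, g2, f2, rfl⟩ := ihα v₂ (by omega) hrest
          refine ⟨u₁ ++ u₂, bs₁ ++ bs₂, ?_, List.rel_append f1 f2, List.flatten_append.symm⟩
          erw [List.map_cons, List.map_append]
          exact (g1.append_right _).trans (g2.append_left _)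
      obtain ⟨u, bs, hg, hf, rfl⟩ := sub x.2.2 w' hlen h1
      refine ⟨x.2.1 :: u, w₀ :: bs, ?_, List.Forall₂.cons ⟨hw0len, hw0j⟩ hf, by simp⟩
      have step : (greibachGrammarFin k S P).Produces [Symbol.nonterminal x.1]
          (Symbol.terminal x.2.1 :: x.2.2.map Symbol.nonterminal) :=
        ⟨⟨x.1, Symbol.terminal x.2.1 :: x.2.2.map Symbol.nonterminal⟩,
          (by unfold greibachGrammarFin; dsimp only; exact Finset.mem_image_of_mem _ hx), ContextFreeRule.Rewrites.input_output⟩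
      refine step.trans_derives ?_
      rw [List.map_cons]
      exact hg.append_left [Symbol.terminal x.2.1]

end Main


/-- Let `G` be an ε-free Greibach-form grammar over the indexed alphabet `T = {t₁,…,t_k}` and
`G′` the bitmap grammar over `{0,1}`.  Let `σ` be the substitution mapping each terminal `t_j`
to the set of strings `b ∈ {0,1}^k` whose `j`-th letter is `1`.  Then `L(G′) = σ(L(G))`:
`L(G′)` is exactly the set of concatenations `b₁b₂⋯b_m` such that some string
`t_{j₁}t_{j₂}⋯t_{j_m} ∈ L(G)` satisfies `bᵢ ∈ σ(t_{jᵢ})` for all `i`. -/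
theorem bitmapGrammar_language_eq_substitution
    {N : Type} [DecidableEq N] (k : ℕ) (S : N) (P : Finset (N × Fin k × List N)) :
    (bitmapGrammar k S P).language =
      { w : List Bool | ∃ (u : List (Fin k)) (bs : List (List Bool)),
          u ∈ (greibachGrammarFin k S P).language ∧
          List.Forall₂ (fun (j : Fin k) (b : List Bool) =>
            b.length = k ∧ b[(j : ℕ)]? = some true) u bs ∧
          w = bs.flatten } := by
  ext w
  simp only [ContextFreeGrammar.mem_language_iff, Set.mem_setOf_eq]
  constructor
  · intro h
    obtain ⟨u, bs, hg, hf, rfl⟩ := bitmap_to_greibach (w.length + 1) w (by omega) S h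
    exact ⟨u, bs, hg, hf, rfl⟩
  · rintro ⟨u, bs, hg, hf, rfl⟩
    have h1 := derives_phi (S := S) (P := P) hg
    have h2 := expand_T (S := S) (P := P) hf
    refine Derives.trans ?_ h2
    have e : List.map (bitmapPhi (N := N) k) (List.map Symbol.terminal u) =
        List.map (fun j => Symbol.nonterminal (Sum.inr (some j) : N ⊕ Option (Fin k))) u := by
      simp [bitmapPhi, Function.comp_def]
    exact cast (congrArg ((bitmapGrammar k S P).Derives
      [Symbol.nonterminal (bitmapGrammar k S P).initial]) e) h1
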